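/- arXiv:2405.10058 — 3 statements merged into one kernel-verified Lean document; each statement's English description precedes it below -/
import Mathlib

section
/- Fix a vertex v of G with |L_v| ≥ deg(v) + 1. Then the probability that c_v ≠ 0 and c_u ≠ c_v for every neighbor u of v is strictly greater than 1/4. (Per-iteration coloring lemma: an uncolored node gets properly colored in one iteration of the randomized procedure with probability more than 1/4.) -/
open MeasureTheory ProbabilityTheory ENNReal

/-- **Per-iteration coloring lemma.**
Let `G` be a finite simple graph on vertex set `V`. Each vertex `u` has a finite
nonempty list `L u ⊆ ℕ ∖ {0}` of colors. Independently for each vertex `u`, a random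
tentative color `c u` is sampled: `c u = 0` with probability `1/2`, and `c u = x` with
probability `1/(2·|L u|)` for each `x ∈ L u`. If `|L v| ≥ deg(v) + 1`, then the
probability that `c v ≠ 0` and `c u ≠ c v` for every neighbor `u` of `v` is
strictly greater than `1/4`. -/
theorem per_iteration_coloring
    {V : Type*} [Fintype V] [DecidableEq V]
    (G : SimpleGraph V) [DecidableRel G.Adj]
    (L : V → Finset ℕ)
    (hL0 : ∀ u, 0 ∉ L u) (hLne : ∀ u, (L u).Nonempty)
    {Ω : Type*} [MeasurableSpace Ω] (P : Measure Ω) [IsProbabilityMeasure P]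
    (c : V → Ω → ℕ)
    (hmeas : ∀ u, Measurable (c u))
    (hindep : iIndepFun c P)
    (hzero : ∀ u, P {ω | c u ω = 0} = 1 / 2)
    (hcol : ∀ u, ∀ x ∈ L u, P {ω | c u ω = x} = 1 / (2 * ((L u).card : ℝ≥0∞)))
    (v : V)
    (hdeg : G.degree v + 1 ≤ (L v).card) :
    1 / 4 < P {ω | c v ω ≠ 0 ∧ ∀ u ∈ G.neighborFinset v, c u ω ≠ c v ω} := by
  classical
  set N := G.neighborFinset v with hN
  set k := (L v).card with hkdef
  have hk : 0 < k := Finset.card_pos.mpr (hLne v)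
  have hk' : ((k : ℝ≥0∞)) ≠ 0 := by exact_mod_cast hk.ne'
  have hktop : (k : ℝ≥0∞) ≠ ⊤ := ENNReal.natCast_ne_top k
  have hms : ∀ u (x : ℕ), MeasurableSet {ω | c u ω = x} :=
    fun u x => hmeas u (measurableSet_singleton x)
  set A := {ω | c v ω ≠ 0 ∧ ∀ u ∈ N, c u ω ≠ c v ω} with hA
  set B : ℕ → Set Ω := fun x => {ω | c v ω = x} ∩ ⋂ u ∈ N, {ω | c u ω = x}ᶜ with hB
  have hBm : ∀ x, MeasurableSet (B x) := by
    intro x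
    exact (hms v x).inter (MeasurableSet.biInter N.countable_toSet fun u _ => (hms u x).compl)
  have hBsubA : ∀ x ∈ L v, B x ⊆ A := by
    intro x hx ω hω
    obtain ⟨h1, h2⟩ := hω
    simp only [Set.mem_iInter, Set.mem_compl_iff, Set.mem_setOf_eq] at h1 h2 ⊢
    refine ⟨by rw [h1]; exact fun h0 => hL0 v (h0 ▸ hx), fun u hu => ?_⟩
    rw [h1]; exact h2 u hu
  have hBdisj : (↑(L v) : Set ℕ).PairwiseDisjoint B := by
    intro x _ y _ hxy
    refine Set.disjoint_left.mpr fun ω hωx hωy => hxy ?_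
    have h1 : c v ω = x := hωx.1
    have h2 : c v ω = y := hωy.1
    rw [← h1, ← h2]
  have hsumB : ∑ x ∈ L v, P (B x) ≤ P A := by
    rw [← measure_biUnion_finset hBdisj fun x _ => hBm x]
    exact measure_mono (Set.iUnion₂_subset hBsubA)
  have hcover : ∀ x : ℕ, {ω | c v ω = x} ⊆
      B x ∪ ⋃ u ∈ N, ({ω | c v ω = x} ∩ {ω | c u ω = x}) := by
    intro x ω hω
    by_cases h : ∀ u ∈ N, c u ω ≠ x
    · left
      refine ⟨hω, ?_⟩
      simp only [Set.mem_iInter, Set.mem_compl_iff, Set.mem_setOf_eq]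
      exact h
    · right
      push_neg at h
      obtain ⟨u, hu, hux⟩ := h
      exact Set.mem_biUnion hu ⟨hω, hux⟩
  have hstep1 : ∀ x : ℕ, P {ω | c v ω = x} ≤
      P (B x) + ∑ u ∈ N, P ({ω | c v ω = x} ∩ {ω | c u ω = x}) := by
    intro x
    calc P {ω | c v ω = x} ≤ P (B x ∪ ⋃ u ∈ N, ({ω | c v ω = x} ∩ {ω | c u ω = x})) :=
          measure_mono (hcover x)
      _ ≤ P (B x) + P (⋃ u ∈ N, ({ω | c v ω = x} ∩ {ω | c u ω = x})) := measure_union_le _ _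
      _ ≤ P (B x) + ∑ u ∈ N, P ({ω | c v ω = x} ∩ {ω | c u ω = x}) := by
          gcongr
          exact measure_biUnion_finset_le N _
  have hind : ∀ u ∈ N, ∀ x : ℕ, P ({ω | c v ω = x} ∩ {ω | c u ω = x}) =
      P {ω | c v ω = x} * P {ω | c u ω = x} := by
    intro u hu x
    have hvu : v ≠ u := fun h => G.irrefl (h ▸ (G.mem_neighborFinset v u).mp hu)
    have := (hindep.indepFun hvu).measure_inter_preimage_eq_mul {x} {x}
      (measurableSet_singleton x) (measurableSet_singleton x)
    simpa [Set.preimage] using this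
  have hsum_u : ∀ u : V, ∑ x ∈ L v, P {ω | c u ω = x} ≤ 1 / 2 := by
    intro u
    have hdisj : (↑(L v) : Set ℕ).PairwiseDisjoint (fun x => {ω | c u ω = x}) := by
      intro x _ y _ hxy
      refine Set.disjoint_left.mpr fun ω hωx hωy => hxy ?_
      rw [← hωx, ← hωy]
    rw [measure_biUnion_finset hdisj (fun x _ => hms u x) |>.symm]
    have hsub : (⋃ x ∈ L v, {ω | c u ω = x}) ⊆ {ω | c u ω = 0}ᶜ := by
      intro ω hω
      simp only [Set.mem_iUnion, Set.mem_setOf_eq, exists_prop] at hω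
      obtain ⟨x, hx, hcx⟩ := hω
      simp only [Set.mem_compl_iff, Set.mem_setOf_eq, hcx]
      exact fun h0 => hL0 v (h0 ▸ hx)
    calc P (⋃ x ∈ L v, {ω | c u ω = x}) ≤ P {ω | c u ω = 0}ᶜ := measure_mono hsub
      _ = 1 - 1 / 2 := by rw [prob_compl_eq_one_sub (hms u 0), hzero u]
      _ = 1 / 2 := by
          rw [one_div, ENNReal.sub_eq_of_eq_add (by simp)]
          rw [ENNReal.inv_two_add_inv_two]
  have hpv : ∀ x ∈ L v, P {ω | c v ω = x} = (2 * (k : ℝ≥0∞))⁻¹ := by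
    intro x hx
    rw [hcol v x hx, one_div]
  have hhalf : (∑ x ∈ L v, P {ω | c v ω = x}) = 1 / 2 := by
    rw [Finset.sum_congr rfl hpv, Finset.sum_const, ← hkdef, nsmul_eq_mul,
      ENNReal.mul_inv (Or.inl (by norm_num)) (Or.inl (by norm_num)), ← mul_assoc,
      mul_comm (k : ℝ≥0∞) 2⁻¹, mul_assoc, ENNReal.mul_inv_cancel hk' hktop, mul_one, one_div]
  have hmain : (1 : ℝ≥0∞) / 2 ≤ P A + (2 * (k : ℝ≥0∞))⁻¹ * ((N.card : ℝ≥0∞) * (1 / 2)) := by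
    calc (1 : ℝ≥0∞) / 2 = ∑ x ∈ L v, P {ω | c v ω = x} := hhalf.symm
      _ ≤ ∑ x ∈ L v, (P (B x) + ∑ u ∈ N, P ({ω | c v ω = x} ∩ {ω | c u ω = x})) :=
          Finset.sum_le_sum fun x _ => hstep1 x
      _ = ∑ x ∈ L v, P (B x) + ∑ x ∈ L v, ∑ u ∈ N, P {ω | c v ω = x} * P {ω | c u ω = x} := by
          rw [Finset.sum_add_distrib]
          congr 1
          exact Finset.sum_congr rfl fun x hx => Finset.sum_congr rfl fun u hu => hind u hu x
      _ = ∑ x ∈ L v, P (B x) + (2 * (k : ℝ≥0∞))⁻¹ * ∑ u ∈ N, ∑ x ∈ L v, P {ω | c u ω = x} := by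
          congr 1
          rw [Finset.sum_comm, Finset.mul_sum]
          refine Finset.sum_congr rfl fun u hu => ?_
          rw [Finset.mul_sum]
          exact Finset.sum_congr rfl fun x hx => by rw [hpv x hx]
      _ ≤ P A + (2 * (k : ℝ≥0∞))⁻¹ * ((N.card : ℝ≥0∞) * (1 / 2)) := by
          refine add_le_add hsumB (mul_le_mul_right ?_ _)
          calc ∑ u ∈ N, ∑ x ∈ L v, P {ω | c u ω = x} ≤ ∑ u ∈ N, (1 : ℝ≥0∞) / 2 :=
                  Finset.sum_le_sum fun u _ => hsum_u u
            _ = (N.card : ℝ≥0∞) * (1 / 2) := by rw [Finset.sum_const, nsmul_eq_mul]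
  -- final arithmetic
  by_contra hcon
  push_neg at hcon
  set d := N.card with hd
  have hdk : d + 1 ≤ k := hdeg
  have h1 : (1 : ℝ≥0∞) / 2 ≤ 1 / 4 + (2 * (k : ℝ≥0∞))⁻¹ * ((d : ℝ≥0∞) * (1 / 2)) :=
    hmain.trans (by gcongr)
  -- multiply through by 4k
  have h2 : (k : ℝ≥0∞) ≤ (d : ℝ≥0∞) := by
    have e1 : (2 * (k : ℝ≥0∞))⁻¹ * ((d : ℝ≥0∞) * (1 / 2)) = (d : ℝ≥0∞) / (4 * k) := by
      have h4k : (4 : ℝ≥0∞) * k = (2 * k) * 2 := by ring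
      have hinv : ((2 * (k : ℝ≥0∞)) * 2)⁻¹ = (2 * (k : ℝ≥0∞))⁻¹ * 2⁻¹ :=
        ENNReal.mul_inv (Or.inl (mul_ne_zero two_ne_zero hk')) (Or.inl (by finiteness))
      conv_rhs => rw [h4k, div_eq_mul_inv, hinv]
      rw [one_div]
      ring
    rw [e1] at h1
    have h3 : (1 : ℝ≥0∞) / 4 + 1 / 4 ≤ 1 / 4 + (d : ℝ≥0∞) / (4 * k) := by
      calc (1 : ℝ≥0∞) / 4 + 1 / 4 = 1 / 2 := by
            rw [ENNReal.div_add_div_same, ENNReal.div_eq_div_iff] <;> norm_num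
        _ ≤ _ := h1
    have h4 : (1 : ℝ≥0∞) / 4 ≤ (d : ℝ≥0∞) / (4 * k) :=
      (ENNReal.add_le_add_iff_left (by norm_num)).mp h3
    have h5 : (1 : ℝ≥0∞) / 4 * (4 * k) ≤ (d : ℝ≥0∞) :=
      (ENNReal.le_div_iff_mul_le (Or.inl (mul_ne_zero (by norm_num) hk'))
        (Or.inl (by finiteness))).mp h4
    calc (k : ℝ≥0∞) = (1 : ℝ≥0∞) / 4 * (4 * k) := by
          rw [one_div, ← mul_assoc, ENNReal.inv_mul_cancel (by norm_num) (by norm_num), one_mul]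
      _ ≤ (d : ℝ≥0∞) := h5
  have : k ≤ d := by exact_mod_cast h2
  omega
end

section
/- Fix a vertex v of G with |L_v| ≥ deg(v) + 1. Then the conditional probability Pr[∃ u ∈ N(v) : c_u = c_v | c_v ≠ 0] is at most deg(v)/(2·|L_v|), and in particular is strictly less than 1/2. -/
open MeasureTheory ProbabilityTheory ENNReal

/-- **Union bound over the neighborhood.**
Each vertex `u` of a finite graph `G` has a finite nonempty list `L u ⊆ ℕ ∖ {0}` of colors,
and independently for each vertex, a random tentative color `c u` is sampled: `c u = 0` with
probability `1/2`, and `c u = x` with probability `1/(2·|L u|)` for each `x ∈ L u`.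
If `|L v| ≥ deg(v) + 1`, then
`Pr[∃ u ∈ N(v), c u = c v | c v ≠ 0] ≤ deg(v)/(2·|L v|) < 1/2`. -/
theorem neighborhood_union_bound
    {V : Type*} [Fintype V] [DecidableEq V]
    (G : SimpleGraph V) [DecidableRel G.Adj]
    (L : V → Finset ℕ)
    (hL0 : ∀ u, 0 ∉ L u) (hLne : ∀ u, (L u).Nonempty)
    {Ω : Type*} [MeasurableSpace Ω] (P : Measure Ω) [IsProbabilityMeasure P]
    (c : V → Ω → ℕ)
    (hmeas : ∀ u, Measurable (c u))
    (hindep : iIndepFun c P)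
    (hzero : ∀ u, P {ω | c u ω = 0} = 1 / 2)
    (hcol : ∀ u, ∀ x ∈ L u, P {ω | c u ω = x} = 1 / (2 * ((L u).card : ℝ≥0∞)))
    (v : V)
    (hdeg : G.degree v + 1 ≤ (L v).card) :
    P[{ω | ∃ u ∈ G.neighborFinset v, c u ω = c v ω} | {ω | c v ω ≠ 0}]
        ≤ (G.degree v : ℝ≥0∞) / (2 * ((L v).card : ℝ≥0∞))
      ∧ P[{ω | ∃ u ∈ G.neighborFinset v, c u ω = c v ω} | {ω | c v ω ≠ 0}] < 1 / 2 := by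
  classical
  set k : ℝ≥0∞ := ((L v).card : ℝ≥0∞) with hkdef
  have hk0 : k ≠ 0 := by
    simp [hkdef, Finset.card_eq_zero, (hLne v).ne_empty]
  have hktop : k ≠ ∞ := by simp [hkdef]
  have hmeasEq : ∀ u x, MeasurableSet {ω | c u ω = x} :=
    fun u x => (hmeas u) (measurableSet_singleton x)
  set A : Set Ω := {ω | ∃ u ∈ G.neighborFinset v, c u ω = c v ω} with hA
  set B : Set Ω := {ω | c v ω ≠ 0} with hB
  have hBmeas : MeasurableSet B := (hmeasEq v 0).compl
  -- P(c u ≠ 0) = 1/2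
  have hne0 : ∀ u, P {ω | c u ω ≠ 0} = 1 / 2 := by
    intro u
    have h1 : {ω | c u ω ≠ 0} = {ω | c u ω = 0}ᶜ := rfl
    rw [h1, prob_compl_eq_one_sub (hmeasEq u 0), hzero u]
    rw [one_div, ENNReal.one_sub_inv_two]
  -- the "support" event has full measure
  have hsum : ∀ u (s : Finset ℕ), ∑ x ∈ s, P {ω | c u ω = x} = P (⋃ x ∈ s, {ω | c u ω = x}) := by
    intro u s
    refine (measure_biUnion_finset ?_ (fun x _ => hmeasEq u x)).symm
    intro x hx y hy hxy
    refine Set.disjoint_left.2 fun ω h1 h2 => hxy ?_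
    simp only [Set.mem_setOf_eq] at h1 h2
    rw [← h1, ← h2]
  have hhalf : ∀ u (s : Finset ℕ), 0 ∉ s → ∑ x ∈ s, P {ω | c u ω = x} ≤ 1 / 2 := by
    intro u s hs
    rw [hsum u s]
    have hsub : (⋃ x ∈ s, {ω | c u ω = x}) ⊆ {ω | c u ω ≠ 0} := by
      intro ω hω
      simp only [Set.mem_iUnion, Set.mem_setOf_eq] at hω ⊢
      obtain ⟨x, hx, hcx⟩ := hω
      rw [hcx]; exact fun h => hs (h ▸ hx)
    calc P (⋃ x ∈ s, {ω | c u ω = x}) ≤ P {ω | c u ω ≠ 0} := measure_mono hsub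
    _ = 1 / 2 := hne0 u
  have hk2 : k * (1 / (2 * k)) = 1 / 2 := by
    rw [one_div, ENNReal.mul_inv (Or.inl two_ne_zero) (Or.inl ofNat_ne_top), ← mul_assoc,
      mul_comm k 2⁻¹, mul_assoc, ENNReal.mul_inv_cancel hk0 hktop, mul_one, one_div]
  -- null set: P(c v ≠ 0 and c v ∉ L v) = 0
  have hNnull : P {ω | c v ω ≠ 0 ∧ c v ω ∉ L v} = 0 := by
    have hfull : P ({ω | c v ω = 0} ∪ ⋃ x ∈ L v, {ω | c v ω = x}) = 1 := by
      rw [measure_union ?_ (Finset.measurableSet_biUnion _ (fun x _ => hmeasEq v x))]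
      · rw [hzero v, ← hsum v]
        have h1 : ∑ x ∈ L v, P {ω | c v ω = x} = k * (1 / (2 * k)) := by
          rw [Finset.sum_congr rfl (fun x hx => hcol v x hx)]
          simp [hkdef, mul_comm]
        rw [h1, hk2, one_div, ← two_mul, ENNReal.mul_inv_cancel two_ne_zero ofNat_ne_top]
      · refine Set.disjoint_left.2 fun ω h1 h2 => ?_
        simp only [Set.mem_iUnion, Set.mem_setOf_eq] at h1 h2
        obtain ⟨x, hx, hcx⟩ := h2
        exact hL0 v (h1 ▸ hcx ▸ hx)
    have hcompl : {ω | c v ω ≠ 0 ∧ c v ω ∉ L v}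
        = ({ω | c v ω = 0} ∪ ⋃ x ∈ L v, {ω | c v ω = x})ᶜ := by
      ext ω
      simp only [Set.mem_setOf_eq, Set.mem_compl_iff, Set.mem_union, Set.mem_iUnion, not_or,
        not_exists]
      constructor
      · rintro ⟨h1, h2⟩
        exact ⟨h1, fun x hx hcx => h2 (hcx ▸ hx)⟩
      · rintro ⟨h1, h2⟩
        exact ⟨h1, fun hmem => h2 _ hmem rfl⟩
    rw [hcompl, prob_compl_eq_one_sub, hfull, tsub_self]
    exact (hmeasEq v 0).union (Finset.measurableSet_biUnion _ (fun x _ => hmeasEq v x))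
  -- bound on P (B ∩ A)
  have hBA : P (B ∩ A) ≤ (G.degree v : ℝ≥0∞) * (1 / 2 * (1 / (2 * k))) := by
    have hsub : B ∩ A ⊆ {ω | c v ω ≠ 0 ∧ c v ω ∉ L v}
        ∪ ⋃ u ∈ G.neighborFinset v, ⋃ x ∈ L v, ({ω | c u ω = x} ∩ {ω | c v ω = x}) := by
      rintro ω ⟨hωB, hωA⟩
      simp only [hA, hB, Set.mem_setOf_eq] at hωA hωB
      obtain ⟨u, hu, hcu⟩ := hωA
      by_cases hcv : c v ω ∈ L v
      · right
        simp only [Set.mem_iUnion, Set.mem_inter_iff, Set.mem_setOf_eq]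
        exact ⟨u, hu, c v ω, hcv, hcu, rfl⟩
      · exact Or.inl ⟨hωB, hcv⟩
    calc P (B ∩ A) ≤ P {ω | c v ω ≠ 0 ∧ c v ω ∉ L v}
          + P (⋃ u ∈ G.neighborFinset v, ⋃ x ∈ L v, ({ω | c u ω = x} ∩ {ω | c v ω = x})) :=
        (measure_mono hsub).trans (measure_union_le _ _)
      _ = P (⋃ u ∈ G.neighborFinset v, ⋃ x ∈ L v, ({ω | c u ω = x} ∩ {ω | c v ω = x})) := by
          rw [hNnull, zero_add]
      _ ≤ ∑ u ∈ G.neighborFinset v, P (⋃ x ∈ L v, ({ω | c u ω = x} ∩ {ω | c v ω = x})) :=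
          measure_biUnion_finset_le _ _
      _ ≤ ∑ u ∈ G.neighborFinset v, (1 / 2 * (1 / (2 * k))) := by
          refine Finset.sum_le_sum fun u hu => ?_
          have hune : u ≠ v := ((G.mem_neighborFinset v u).1 hu).ne'
          have hind : IndepFun (c u) (c v) P := hindep.indepFun hune
          calc P (⋃ x ∈ L v, ({ω | c u ω = x} ∩ {ω | c v ω = x}))
              ≤ ∑ x ∈ L v, P ({ω | c u ω = x} ∩ {ω | c v ω = x}) :=
                measure_biUnion_finset_le _ _
            _ = ∑ x ∈ L v, P {ω | c u ω = x} * P {ω | c v ω = x} := by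
                refine Finset.sum_congr rfl fun x hx => ?_
                exact hind.measure_inter_preimage_eq_mul {x} {x}
                  (measurableSet_singleton x) (measurableSet_singleton x)
            _ = (∑ x ∈ L v, P {ω | c u ω = x}) * (1 / (2 * k)) := by
                rw [Finset.sum_mul]
                exact Finset.sum_congr rfl fun x hx => by rw [hcol v x hx, hkdef]
            _ ≤ 1 / 2 * (1 / (2 * k)) :=
                mul_le_mul_left (hhalf u (L v) (hL0 v)) _
      _ = (G.degree v : ℝ≥0∞) * (1 / 2 * (1 / (2 * k))) := by
          rw [Finset.sum_const, G.card_neighborFinset_eq_degree, nsmul_eq_mul]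
  -- compute conditional probability
  have hcond : P[A | B] = 2 * P (B ∩ A) := by
    rw [cond_apply hBmeas, hne0 v, one_div, inv_inv]
  have hmain : P[A | B] ≤ (G.degree v : ℝ≥0∞) / (2 * k) := by
    rw [hcond]
    calc 2 * P (B ∩ A) ≤ 2 * ((G.degree v : ℝ≥0∞) * (1 / 2 * (1 / (2 * k)))) :=
        mul_le_mul_right hBA 2
      _ = (G.degree v : ℝ≥0∞) / (2 * k) := by
        rw [one_div, one_div, div_eq_mul_inv, mul_left_comm 2, ← mul_assoc 2 2⁻¹,
          ENNReal.mul_inv_cancel two_ne_zero ofNat_ne_top, one_mul]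
  refine ⟨hmain, lt_of_le_of_lt hmain ?_⟩
  have h2k0 : (2 * k : ℝ≥0∞) ≠ 0 := by
    simp [hk0]
  have h2ktop : (2 * k : ℝ≥0∞) ≠ ∞ := by
    simp [ENNReal.mul_ne_top, hktop]
  rw [ENNReal.div_lt_iff (Or.inl h2k0) (Or.inl h2ktop)]
  have : (1 : ℝ≥0∞) / 2 * (2 * k) = k := by
    rw [one_div, ← mul_assoc, ENNReal.inv_mul_cancel two_ne_zero ofNat_ne_top, one_mul]
  rw [this, hkdef]
  exact_mod_cast Nat.lt_of_succ_le hdeg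
end

section
/- Fix a vertex v of G with |L_v| ≥ deg(v) + 1. Then the conditional probability Pr[∀ u ∈ N(v) : c_u ≠ c_v | c_v ≠ 0] is strictly greater than 1/2. -/
open MeasureTheory ProbabilityTheory ENNReal

/-- **No-collision conditional probability.**
Each vertex `u` of a finite graph `G` has a finite nonempty list `L u ⊆ ℕ ∖ {0}` of colors,
and independently for each vertex, a random tentative color `c u` is sampled: `c u = 0` with
probability `1/2`, and `c u = x` with probability `1/(2·|L u|)` for each `x ∈ L u`.
If `|L v| ≥ deg(v) + 1`, then `Pr[∀ u ∈ N(v), c u ≠ c v | c v ≠ 0] > 1/2`. -/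
theorem no_collision_conditional
    {V : Type*} [Fintype V] [DecidableEq V]
    (G : SimpleGraph V) [DecidableRel G.Adj]
    (L : V → Finset ℕ)
    (hL0 : ∀ u, 0 ∉ L u) (hLne : ∀ u, (L u).Nonempty)
    {Ω : Type*} [MeasurableSpace Ω] (P : Measure Ω) [IsProbabilityMeasure P]
    (c : V → Ω → ℕ)
    (hmeas : ∀ u, Measurable (c u))
    (hindep : iIndepFun c P)
    (hzero : ∀ u, P {ω | c u ω = 0} = 1 / 2)
    (hcol : ∀ u, ∀ x ∈ L u, P {ω | c u ω = x} = 1 / (2 * ((L u).card : ℝ≥0∞)))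
    (v : V)
    (hdeg : G.degree v + 1 ≤ (L v).card) :
    1 / 2 < P[{ω | ∀ u ∈ G.neighborFinset v, c u ω ≠ c v ω} | {ω | c v ω ≠ 0}] := by
  classical
  set A : Set Ω := {ω | ∀ u ∈ G.neighborFinset v, c u ω ≠ c v ω} with hAdef
  set B : Set Ω := {ω | c v ω ≠ 0} with hBdef
  have hms : ∀ u (x : ℕ), MeasurableSet {ω | c u ω = x} := fun u x =>
    (hmeas u) (measurableSet_singleton x)
  have hEq : ∀ u, MeasurableSet {ω | c u ω = c v ω} := by
    intro u
    have h : {ω | c u ω = c v ω} = ⋃ n : ℕ, ({ω | c u ω = n} ∩ {ω | c v ω = n}) := by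
      ext ω
      simp only [Set.mem_iUnion, Set.mem_inter_iff, Set.mem_setOf_eq]
      constructor
      · intro h; exact ⟨c v ω, h, rfl⟩
      · rintro ⟨n, h1, h2⟩; rw [h1, h2]
    rw [h]
    exact MeasurableSet.iUnion fun n => (hms u n).inter (hms v n)
  have hAmeas : MeasurableSet A := by
    have h : A = ⋂ u ∈ G.neighborFinset v, {ω | c u ω = c v ω}ᶜ := by
      ext ω
      simp [hAdef, Set.mem_iInter]
    rw [h]
    exact MeasurableSet.biInter (Set.to_countable _) fun u _ => (hEq u).compl
  have hBcompl : B = {ω | c v ω = 0}ᶜ := rfl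
  have hBmeas : MeasurableSet B := (hms v 0).compl
  have hPB : P B = 1 / 2 := by
    rw [hBcompl, measure_compl (hms v 0) (measure_ne_top _ _), measure_univ, hzero v]
    rw [one_div, ENNReal.one_sub_inv_two]
  -- the nonzero-probability cardinality
  set k : ℕ := (L v).card with hkdef
  have hk0 : (k : ℝ≥0∞) ≠ 0 := by
    simp [hkdef, Finset.card_ne_zero_of_mem (hLne v).choose_spec]
  have hktop : (k : ℝ≥0∞) ≠ ∞ := ENNReal.natCast_ne_top k
  -- the values of c v are a.s. in {0} ∪ L v
  have hfull : P (⋃ x ∈ insert 0 (L v), {ω | c v ω = x}) = 1 := by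
    rw [measure_biUnion_finset]
    · rw [Finset.sum_insert (hL0 v), hzero v]
      have : ∀ x ∈ L v, P {ω | c v ω = x} = 1 / (2 * (k : ℝ≥0∞)) := fun x hx =>
        hcol v x hx
      rw [Finset.sum_congr rfl this, Finset.sum_const, ← hkdef, nsmul_eq_mul]
      have h2 : (k : ℝ≥0∞) * (1 / (2 * (k : ℝ≥0∞))) = 1 / 2 := by
        rw [one_div, ENNReal.mul_inv (Or.inr hktop) (Or.inr hk0), ← mul_assoc,
          mul_comm (k : ℝ≥0∞) (2 : ℝ≥0∞)⁻¹, mul_assoc,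
          ENNReal.mul_inv_cancel hk0 hktop, mul_one, one_div]
      rw [h2, ENNReal.add_halves]
    · intro x hx y hy hxy
      simp only [Function.onFun, Set.disjoint_left, Set.mem_setOf_eq]
      intro ω h1 h2
      exact hxy (h1 ▸ h2 ▸ rfl)
    · exact fun x _ => hms v x
  have hnull : P ((⋃ x ∈ insert 0 (L v), {ω | c v ω = x})ᶜ) = 0 := by
    rw [measure_compl (Finset.measurableSet_biUnion _ fun x _ => hms v x)
      (measure_ne_top _ _), measure_univ, hfull, tsub_self]
  -- per-neighbor collision bound
  have hkey : ∀ u ∈ G.neighborFinset v,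
      P ({ω | c u ω = c v ω} ∩ B) ≤ 1 / (4 * (k : ℝ≥0∞)) := by
    intro u hu
    have hne : u ≠ v := ((G.mem_neighborFinset v u).mp hu).ne'
    have hIndep : IndepFun (c u) (c v) P := hindep.indepFun hne
    -- sum of P(c u = x) over x ∈ L v is at most 1/2
    have hsumu : ∑ x ∈ L v, P {ω | c u ω = x} ≤ 1 / 2 := by
      have hdisj : Set.PairwiseDisjoint ↑(L v) (fun x => {ω | c u ω = x}) := by
        intro x hx y hy hxy
        simp only [Function.onFun, Set.disjoint_left, Set.mem_setOf_eq]
        intro ω h1 h2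
        exact hxy (h1 ▸ h2 ▸ rfl)
      rw [← measure_biUnion_finset hdisj fun x _ => hms u x]
      have hsub : (⋃ x ∈ L v, {ω | c u ω = x}) ⊆ {ω | c u ω = 0}ᶜ := by
        intro ω hω
        simp only [Set.mem_iUnion, Set.mem_setOf_eq] at hω
        obtain ⟨x, hx, hcx⟩ := hω
        simp only [Set.mem_compl_iff, Set.mem_setOf_eq]
        intro h0
        exact hL0 v (by rwa [← hcx, h0] at hx)
      calc P (⋃ x ∈ L v, {ω | c u ω = x}) ≤ P ({ω | c u ω = 0}ᶜ) := measure_mono hsub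
        _ = 1 - P {ω | c u ω = 0} := by
            rw [measure_compl (hms u 0) (measure_ne_top _ _), measure_univ]
        _ = 1 / 2 := by rw [hzero u, one_div, ENNReal.one_sub_inv_two]
    have hsub : {ω | c u ω = c v ω} ∩ B ⊆
        (⋃ x ∈ L v, ({ω | c u ω = x} ∩ {ω | c v ω = x})) ∪
        (⋃ x ∈ insert 0 (L v), {ω | c v ω = x})ᶜ := by
      rintro ω ⟨heq, hne0⟩
      by_cases hmem : c v ω ∈ L v
      · left
        refine Set.mem_biUnion hmem ⟨heq, rfl⟩
      · right
        simp only [Set.mem_compl_iff, Set.mem_iUnion, Set.mem_setOf_eq, not_exists]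
        rintro x hx hcx
        rcases Finset.mem_insert.mp hx with h0 | hL
        · exact hne0 (hcx.trans h0)
        · exact hmem (hcx ▸ hL)
    calc P ({ω | c u ω = c v ω} ∩ B)
        ≤ P ((⋃ x ∈ L v, ({ω | c u ω = x} ∩ {ω | c v ω = x})) ∪
            (⋃ x ∈ insert 0 (L v), {ω | c v ω = x})ᶜ) := measure_mono hsub
      _ ≤ P (⋃ x ∈ L v, ({ω | c u ω = x} ∩ {ω | c v ω = x})) +
            P ((⋃ x ∈ insert 0 (L v), {ω | c v ω = x})ᶜ) := measure_union_le _ _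
      _ = P (⋃ x ∈ L v, ({ω | c u ω = x} ∩ {ω | c v ω = x})) := by rw [hnull, add_zero]
      _ ≤ ∑ x ∈ L v, P ({ω | c u ω = x} ∩ {ω | c v ω = x}) :=
            measure_biUnion_finset_le _ _
      _ = ∑ x ∈ L v, P {ω | c u ω = x} * P {ω | c v ω = x} := by
            refine Finset.sum_congr rfl fun x _ => ?_
            have := hIndep.measure_inter_preimage_eq_mul {x} {x}
              (measurableSet_singleton x) (measurableSet_singleton x)
            simpa [Set.preimage] using this
      _ = ∑ x ∈ L v, P {ω | c u ω = x} * (1 / (2 * (k : ℝ≥0∞))) := by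
            refine Finset.sum_congr rfl fun x hx => ?_
            rw [hcol v x hx]
      _ = (∑ x ∈ L v, P {ω | c u ω = x}) * (1 / (2 * (k : ℝ≥0∞))) := by
            rw [Finset.sum_mul]
      _ ≤ (1 / 2) * (1 / (2 * (k : ℝ≥0∞))) := by
            exact mul_le_mul_left hsumu _
      _ = 1 / (4 * (k : ℝ≥0∞)) := by
            rw [one_div, one_div, one_div,
              ← ENNReal.mul_inv (Or.inl two_ne_zero) (Or.inl ENNReal.ofNat_ne_top),
              ← mul_assoc]
            norm_num
  -- union bound
  have hBA : B ∩ Aᶜ ⊆ ⋃ u ∈ G.neighborFinset v, ({ω | c u ω = c v ω} ∩ B) := by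
    rintro ω ⟨hB, hA⟩
    simp only [hAdef, Set.mem_compl_iff, Set.mem_setOf_eq, not_forall] at hA
    obtain ⟨u, hu, hcu⟩ := hA
    exact Set.mem_biUnion hu ⟨not_not.mp hcu, hB⟩
  have hPBA : P (B ∩ Aᶜ) < 1 / 4 := by
    have h1 : P (B ∩ Aᶜ) ≤ ∑ u ∈ G.neighborFinset v, (1 / (4 * (k : ℝ≥0∞))) :=
      le_trans (measure_mono hBA)
        (le_trans (measure_biUnion_finset_le _ _) (Finset.sum_le_sum hkey))
    rw [Finset.sum_const, SimpleGraph.card_neighborFinset_eq_degree, nsmul_eq_mul] at h1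
    refine lt_of_le_of_lt h1 ?_
    have h4k0 : (4 : ℝ≥0∞) * (k : ℝ≥0∞) ≠ 0 := by
      simp [hk0]
    have h4ktop : (4 : ℝ≥0∞) * (k : ℝ≥0∞) ≠ ∞ := by
      exact ENNReal.mul_ne_top (by norm_num) hktop
    rw [mul_one_div, ENNReal.div_lt_iff (Or.inl h4k0) (Or.inl h4ktop)]
    have : (1 : ℝ≥0∞) / 4 * (4 * (k : ℝ≥0∞)) = (k : ℝ≥0∞) := by
      rw [one_div, ← mul_assoc, ENNReal.inv_mul_cancel (by norm_num) (by norm_num), one_mul]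
    rw [this]
    exact_mod_cast Nat.lt_of_succ_le hdeg
  -- split P B
  have hsplit : P (B ∩ A) + P (B ∩ Aᶜ) = 1 / 2 := by
    rw [← Set.diff_eq, measure_inter_add_diff B hAmeas, hPB]
  have hPBAgt : 1 / 4 < P (B ∩ A) := by
    by_contra h
    push_neg at h
    have hlt : P (B ∩ A) + P (B ∩ Aᶜ) < 1 / 4 + 1 / 4 :=
      ENNReal.add_lt_add_of_le_of_lt (by norm_num) h hPBA
    have h4 : (4 : ℝ≥0∞)⁻¹ = 2⁻¹ * 2⁻¹ := by
      rw [← ENNReal.mul_inv (by norm_num) (by norm_num)]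
      norm_num
    have h44 : (1 : ℝ≥0∞) / 4 + 1 / 4 = 1 / 2 := by
      simp only [one_div, h4, ← add_mul, ENNReal.inv_two_add_inv_two, one_mul]
    rw [hsplit, h44] at hlt
    exact lt_irrefl _ hlt
  rw [cond_apply hBmeas, hPB]
  have h2 : ((1 : ℝ≥0∞) / 2)⁻¹ = 2 := by
    rw [one_div, inv_inv]
  rw [h2]
  have h4 : (4 : ℝ≥0∞)⁻¹ = 2⁻¹ * 2⁻¹ := by
    rw [← ENNReal.mul_inv (by norm_num) (by norm_num)]
    norm_num
  calc (1 : ℝ≥0∞) / 2 = 2 * (1 / 4) := by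
        rw [one_div, one_div, h4, ← mul_assoc,
          ENNReal.mul_inv_cancel two_ne_zero ENNReal.ofNat_ne_top, one_mul]
    _ < 2 * P (B ∩ A) := by
        rw [ENNReal.mul_lt_mul_iff_right (by norm_num) (by norm_num)]
        exact hPBAgt
end
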